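/- Let θ: [r₀, ∞) → [0, ∞) be a function, C > 0, β > 0 constants, and suppose for some d with C·e^{−βd} ≤ 1/4 the inequality θ(a + d) ≤ C·e^{−βd}·(θ(a) + θ(a − d)) + C·a^{−2} holds for all a ≥ r₀ + d. If θ is bounded, then there exists C̄ such that θ(a) ≤ C̄·a^{−2} for all a ≥ 2r₀. -/
import Mathlib


/-- Let θ : [r₀, ∞) → [0, ∞), C > 0, β > 0, and suppose for some d > 0 with
C·e^{−βd} ≤ 1/4 the inequality θ(a + d) ≤ C·e^{−βd}·(θ(a) + θ(a − d)) + C·a⁻² holds for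
all a ≥ r₀ + d. If θ is bounded, then there exists C̄ such that θ(a) ≤ C̄·a⁻² for all
a ≥ 2r₀. -/
theorem stmt_17 (r₀ C β d : ℝ) (hr₀ : 0 < r₀) (hC : 0 < C) (hβ : 0 < β) (hd : 0 < d)
    (hsmall : C * Real.exp (-β * d) ≤ 1 / 4)
    (θ : ℝ → ℝ) (hθ0 : ∀ a ∈ Set.Ici r₀, 0 ≤ θ a)
    (hrec : ∀ a ≥ r₀ + d,
      θ (a + d) ≤ C * Real.exp (-β * d) * (θ a + θ (a - d)) + C * a⁻¹ ^ 2)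
    (hbdd : ∃ M : ℝ, ∀ a ∈ Set.Ici r₀, θ a ≤ M) :
    ∃ Cbar : ℝ, ∀ a ≥ 2 * r₀, θ a ≤ Cbar * a⁻¹ ^ 2 := by
  obtain ⟨M, hM⟩ := hbdd
  obtain ⟨q, hq⟩ : ∃ q, q = C * Real.exp (-β * d) := ⟨_, rfl⟩
  rw [← hq] at hsmall hrec
  have hq0 : 0 < q := by rw [hq]; positivity
  obtain ⟨M', hM'def⟩ : ∃ M', M' = max M 0 := ⟨_, rfl⟩
  have hM'0 : 0 ≤ M' := hM'def ▸ le_max_right _ _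
  have hMM' : M ≤ M' := hM'def ▸ le_max_left _ _
  obtain ⟨B, hBdef⟩ : ∃ B, B = 2 * r₀ + 14 * d := ⟨_, rfl⟩
  have hB0 : 0 < B := by rw [hBdef]; positivity
  obtain ⟨K, hKdef⟩ : ∃ K, K = 6 * C + M' * B ^ 2 := ⟨_, rfl⟩
  have hK0 : 0 < K := by
    have : 0 ≤ M' * B ^ 2 := mul_nonneg hM'0 (sq_nonneg B)
    rw [hKdef]; linarith
  have h6 : 6 * C ≤ K := by
    have : 0 ≤ M' * B ^ 2 := mul_nonneg hM'0 (sq_nonneg B)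
    rw [hKdef]; linarith
  refine ⟨K, ?_⟩
  have key : ∀ n : ℕ, ∀ a, r₀ ≤ a → a ≤ B + n * d → θ a ≤ K * a⁻¹ ^ 2 := by
    intro n
    induction n with
    | zero =>
      intro a ha hab
      have ha0 : 0 < a := lt_of_lt_of_le hr₀ ha
      have ha2 : 0 < a ^ 2 := by positivity
      have h1 : θ a ≤ M' := le_trans (hM a ha) hMM'
      have h2 : a ≤ B := by simpa using hab
      have hb2 : a ^ 2 ≤ B ^ 2 := by nlinarith
      have h3 : M' * a ^ 2 ≤ K := by
        have := mul_le_mul_of_nonneg_left hb2 hM'0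
        rw [hKdef]; linarith
      have heq : K * a⁻¹ ^ 2 = K / a ^ 2 := by
        rw [inv_pow]; ring
      rw [heq, le_div_iff₀ ha2]
      nlinarith
    | succ n ih =>
      intro a ha hab
      by_cases hcase : a ≤ B + n * d
      · exact ih a ha hcase
      push_neg at hcase
      have haB' : B < a := by
        have : (0:ℝ) ≤ n * d := by positivity
        linarith
      have h12 : 12 * d < a := by rw [hBdef] at haB'; linarith
      have hx0 : 0 < a - 2 * d := by linarith
      have hy0 : 0 < a - d := by linarith
      have ha0 : 0 < a := by linarith
      have hxr : r₀ ≤ a - 2 * d := by rw [hBdef] at haB'; linarith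
      have hyr : r₀ ≤ a - d := by rw [hBdef] at haB'; linarith
      have hxup : a - 2 * d ≤ B + n * d := by
        push_cast at hab ⊢; linarith
      have hyup : a - d ≤ B + n * d := by
        push_cast at hab ⊢; linarith
      have ihx := ih (a - 2 * d) hxr hxup
      have ihy := ih (a - d) hyr hyup
      have hrecd : a - d ≥ r₀ + d := by rw [hBdef] at haB'; linarith
      have hrec' := hrec (a - d) hrecd
      have e1 : a - d + d = a := by ring
      have e2 : a - d - d = a - 2 * d := by ring
      rw [e1, e2] at hrec'
      have hyx : (a - d)⁻¹ ^ 2 ≤ (a - 2 * d)⁻¹ ^ 2 := by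
        have h1 : (a - d)⁻¹ ≤ (a - 2 * d)⁻¹ := by
          apply inv_anti₀ hx0; linarith
        have h0 : 0 ≤ (a - d)⁻¹ := by positivity
        exact pow_le_pow_left₀ h0 h1 2
      have hcomp : (a - 2 * d)⁻¹ ^ 2 ≤ (36 / 25) * a⁻¹ ^ 2 := by
        have h5 : 5 * a ≤ 6 * (a - 2 * d) := by linarith
        have h1 : (a - 2 * d)⁻¹ ≤ 6 / 5 * a⁻¹ := by
          have hpos : (0:ℝ) < 5 * a / 6 := by linarith
          have hle : 5 * a / 6 ≤ a - 2 * d := by linarith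
          have h2 := inv_anti₀ hpos hle
          have heq : (5 * a / 6)⁻¹ = 6 / 5 * a⁻¹ := by
            rw [inv_div]
            ring
          linarith [heq ▸ h2]
        have h0 : 0 ≤ (a - 2 * d)⁻¹ := by positivity
        calc (a - 2 * d)⁻¹ ^ 2 ≤ (6 / 5 * a⁻¹) ^ 2 := pow_le_pow_left₀ h0 h1 2
          _ = (36 / 25) * a⁻¹ ^ 2 := by ring
      have hθx : 0 ≤ θ (a - 2 * d) := hθ0 _ hxr
      have hθy : 0 ≤ θ (a - d) := hθ0 _ hyr
      have step1 : θ a ≤ q * (K * (a - d)⁻¹ ^ 2 + K * (a - 2 * d)⁻¹ ^ 2) + C * (a - d)⁻¹ ^ 2 := by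
        have hadd : θ (a - d) + θ (a - 2 * d) ≤ K * (a - d)⁻¹ ^ 2 + K * (a - 2 * d)⁻¹ ^ 2 :=
          add_le_add ihy ihx
        have := mul_le_mul_of_nonneg_left hadd hq0.le
        linarith
      have step2 : θ a ≤ (K / 2 + C) * (a - 2 * d)⁻¹ ^ 2 := by
        have hK2 : K * (a - d)⁻¹ ^ 2 ≤ K * (a - 2 * d)⁻¹ ^ 2 :=
          mul_le_mul_of_nonneg_left hyx hK0.le
        have hCy : C * (a - d)⁻¹ ^ 2 ≤ C * (a - 2 * d)⁻¹ ^ 2 :=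
          mul_le_mul_of_nonneg_left hyx hC.le
        have hKx : 0 ≤ K * (a - d)⁻¹ ^ 2 + K * (a - 2 * d)⁻¹ ^ 2 := by positivity
        have hmul := mul_le_mul hsmall
          (show K * (a - d)⁻¹ ^ 2 + K * (a - 2 * d)⁻¹ ^ 2 ≤ 2 * (K * (a - 2 * d)⁻¹ ^ 2) by linarith)
          hKx (by norm_num)
        calc θ a ≤ q * (K * (a - d)⁻¹ ^ 2 + K * (a - 2 * d)⁻¹ ^ 2) + C * (a - d)⁻¹ ^ 2 := step1
          _ ≤ (1/4) * (2 * (K * (a - 2 * d)⁻¹ ^ 2)) + C * (a - 2 * d)⁻¹ ^ 2 := by linarith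
          _ = (K / 2 + C) * (a - 2 * d)⁻¹ ^ 2 := by ring
      have step3 : (K / 2 + C) * (a - 2 * d)⁻¹ ^ 2 ≤ (K / 2 + C) * ((36 / 25) * a⁻¹ ^ 2) :=
        mul_le_mul_of_nonneg_left hcomp (by positivity)
      have final : (K / 2 + C) * ((36 / 25) * a⁻¹ ^ 2) ≤ K * a⁻¹ ^ 2 := by
        have hainv : (0:ℝ) ≤ a⁻¹ ^ 2 := by positivity
        have hc : (K / 2 + C) * (36 / 25) ≤ K := by linarith
        calc (K / 2 + C) * ((36 / 25) * a⁻¹ ^ 2)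
            = ((K / 2 + C) * (36 / 25)) * a⁻¹ ^ 2 := by ring
          _ ≤ K * a⁻¹ ^ 2 := mul_le_mul_of_nonneg_right hc hainv
      linarith
  intro a ha
  have har : r₀ ≤ a := by linarith
  refine key ⌈a / d⌉₊ a har ?_
  have h1 : a / d ≤ (⌈a / d⌉₊ : ℝ) := Nat.le_ceil _
  have h2 : a ≤ (⌈a / d⌉₊ : ℝ) * d := by
    rw [div_le_iff₀ hd] at h1
    linarith
  linarith
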